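/- For every real k with 0 < k² < 1, letting k' = sqrt(1-k²), one has ∫₀¹ x·arcsin(x)/sqrt(1-k²x²) dx = (1/k²)·(E(k) - (π/2)·k'). -/

import Mathlib

open Real Set MeasureTheory intervalIntegral

theorem stmt_9 (k : ℝ) (hk0 : 0 < k ^ 2) (hk1 : k ^ 2 < 1) :
    ∫ x in (0:ℝ)..1, x * Real.arcsin x / Real.sqrt (1 - k ^ 2 * x ^ 2) =
      (1 / k ^ 2) * ((∫ x in (0:ℝ)..1, Real.sqrt ((1 - k ^ 2 * x ^ 2) / (1 - x ^ 2))) -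
        (Real.pi / 2) * Real.sqrt (1 - k ^ 2)) := by
  set g : ℝ → ℝ := fun t => Real.sqrt ((1 - k ^ 2 * t ^ 2) / (1 - t ^ 2)) with hg
  have hpos : ∀ x : ℝ, x ∈ Icc (0:ℝ) 1 → 0 < 1 - k ^ 2 * x ^ 2 := by
    intro x hx
    have hx2 : x ^ 2 ≤ 1 := by nlinarith [hx.1, hx.2]
    nlinarith [hk0, hk1]
  have hgcont : ContinuousOn g (Ioo (0:ℝ) 1) := by
    apply Real.continuous_sqrt.comp_continuousOn
    apply ContinuousOn.div
    · exact (continuous_const.sub (continuous_const.mul (continuous_pow 2))).continuousOn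
    · exact (continuous_const.sub (continuous_pow 2)).continuousOn
    · intro y hy; nlinarith [hy.1, hy.2]
  have hint1 : IntegrableOn (fun t : ℝ => 1 / Real.sqrt (1 - t ^ 2)) (Ioo (0:ℝ) 1) := by
    rw [← integrableOn_Ioc_iff_integrableOn_Ioo]
    apply integrableOn_deriv_of_nonneg (g := Real.arcsin)
    · exact Real.continuous_arcsin.continuousOn
    · intro x hx
      exact Real.hasDerivAt_arcsin (by linarith [hx.1]) (ne_of_lt hx.2)
    · intro x hx; positivity
  have hintg : IntegrableOn g (Ioo (0:ℝ) 1) := by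
    apply Integrable.mono hint1
      (hgcont.aestronglyMeasurable measurableSet_Ioo)
    filter_upwards [ae_restrict_mem measurableSet_Ioo] with t ht
    have h1 : (0:ℝ) < 1 - t ^ 2 := by nlinarith [ht.1, ht.2]
    have h2 : (0:ℝ) < 1 - k ^ 2 * t ^ 2 := hpos t ⟨le_of_lt ht.1, ht.2.le⟩
    have h3 : 1 - k ^ 2 * t ^ 2 ≤ 1 := by nlinarith [sq_nonneg (k*t)]
    rw [Real.norm_of_nonneg (Real.sqrt_nonneg _), Real.norm_of_nonneg (by positivity)]
    show Real.sqrt ((1 - k ^ 2 * t ^ 2) / (1 - t ^ 2)) ≤ 1 / Real.sqrt (1 - t ^ 2)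
    rw [Real.sqrt_div h2.le]
    gcongr
    exact Real.sqrt_le_one.mpr h3
  -- the antiderivative
  set G : ℝ → ℝ := fun x => (1 / k ^ 2) * (∫ t in (0:ℝ)..x, g t)
      - (1 / k ^ 2) * (Real.sqrt (1 - k ^ 2 * x ^ 2) * Real.arcsin x) with hG
  have hGcont : ContinuousOn G (Icc (0:ℝ) 1) := by
    apply ContinuousOn.sub
    · apply ContinuousOn.mul continuousOn_const
      have := intervalIntegral.continuousOn_primitive_interval
        (a := (0:ℝ)) (b := (1:ℝ)) (f := g) (μ := volume) ?_
      · rwa [uIcc_of_le zero_le_one] at this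
      · rw [uIcc_of_le zero_le_one, integrableOn_Icc_iff_integrableOn_Ioo]
        exact hintg
    · apply ContinuousOn.mul continuousOn_const
      exact ((Real.continuous_sqrt.comp
        (continuous_const.sub (continuous_const.mul (continuous_pow 2)))).mul
        Real.continuous_arcsin).continuousOn
  have hGderiv : ∀ x ∈ Ioo (0:ℝ) 1,
      HasDerivAt G (x * Real.arcsin x / Real.sqrt (1 - k ^ 2 * x ^ 2)) x := by
    intro x hx
    have h1 : (0:ℝ) < 1 - x ^ 2 := by nlinarith [hx.1, hx.2]
    have h2 : (0:ℝ) < 1 - k ^ 2 * x ^ 2 := hpos x ⟨hx.1.le, hx.2.le⟩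
    have hs2 : Real.sqrt (1 - k ^ 2 * x ^ 2) ≠ 0 := by positivity
    have hs1 : Real.sqrt (1 - x ^ 2) ≠ 0 := by positivity
    have hd1 : HasDerivAt (fun u => ∫ t in (0:ℝ)..u, g t) (g x) x := by
      apply intervalIntegral.integral_hasDerivAt_right
      · rw [intervalIntegrable_iff_integrableOn_Ioo_of_le hx.1.le]
        exact hintg.mono_set (Ioo_subset_Ioo le_rfl hx.2.le)
      · exact hgcont.stronglyMeasurableAtFilter isOpen_Ioo x hx
      · exact hgcont.continuousAt (Ioo_mem_nhds hx.1 hx.2)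
    -- derivative of sqrt(1-k^2 x^2)
    have hinner : HasDerivAt (fun y : ℝ => 1 - k ^ 2 * y ^ 2) (-(k ^ 2 * (2 * x))) x := by
      have := (hasDerivAt_pow 2 x).const_mul (k ^ 2)
      have := (hasDerivAt_const x (1:ℝ)).sub this
      refine this.congr_deriv ?_
      ring
    have hsq : HasDerivAt (fun y : ℝ => Real.sqrt (1 - k ^ 2 * y ^ 2))
        (-(k ^ 2 * (2 * x)) / (2 * Real.sqrt (1 - k ^ 2 * x ^ 2))) x :=
      hinner.sqrt h2.ne'
    have harc : HasDerivAt Real.arcsin (1 / Real.sqrt (1 - x ^ 2)) x :=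
      Real.hasDerivAt_arcsin (by linarith [hx.1]) (ne_of_lt hx.2)
    have hprod := hsq.mul harc
    have hd2 := (hd1.const_mul (1 / k ^ 2)).sub (hprod.const_mul (1 / k ^ 2))
    refine hd2.congr_deriv ?_
    symm
    have hgx : g x = Real.sqrt (1 - k ^ 2 * x ^ 2) / Real.sqrt (1 - x ^ 2) :=
      Real.sqrt_div h2.le _
    rw [hgx]
    have hms : Real.sqrt (1 - k ^ 2 * x ^ 2) * Real.sqrt (1 - k ^ 2 * x ^ 2)
        = 1 - k ^ 2 * x ^ 2 := Real.mul_self_sqrt h2.le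
    field_simp
    ring_nf
    have hk : k ≠ 0 := by rintro rfl; simp at hk0
    field_simp
  have hcontd : ContinuousOn (fun x : ℝ => x * Real.arcsin x / Real.sqrt (1 - k ^ 2 * x ^ 2))
      (Icc (0:ℝ) 1) := by
    apply ContinuousOn.div
    · exact (continuous_id.mul Real.continuous_arcsin).continuousOn
    · exact (Real.continuous_sqrt.comp
        (continuous_const.sub (continuous_const.mul (continuous_pow 2)))).continuousOn
    · intro x hx
      have := hpos x hx
      positivity
  have hftc := intervalIntegral.integral_eq_sub_of_hasDerivAt_of_le zero_le_one
    hGcont hGderiv (hcontd.intervalIntegrable_of_Icc zero_le_one)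
  rw [hftc]
  have h0 : G 0 = 0 := by simp [hG]
  have h1 : G 1 = (1 / k ^ 2) * (∫ t in (0:ℝ)..1, g t)
      - (1 / k ^ 2) * (Real.sqrt (1 - k ^ 2) * (Real.pi / 2)) := by
    simp [hG, Real.arcsin_one]
  rw [h0, h1]
  ring
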